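/- Let x, y ∈ ℝ⁶ be vectors normalized so that either Q(x) = Q(y) = 1 or Q(x) = Q(y) = −1. Then the complex-linear operator M = X(x)·conj(X(y)) (the product of the two antilinear Clifford operators) belongs to SU(2,2): M G M† = G and det M = 1, where M† is the conjugate transpose. (This realizes elements of the spin group Spin(4,2) inside SU(2,2).) -/

import Mathlib

open Matrix Complex

/-- The six antilinear-Clifford matrices Γ₁,…,Γ₆ (indexed 0,…,5). -/
noncomputable def Gam : Fin 6 → Matrix (Fin 4) (Fin 4) ℂ
  | 0 => !![0, 0, I, 0; 0, 0, 0, -I; I, 0, 0, 0; 0, -I, 0, 0]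
  | 1 => !![0, 0, 1, 0; 0, 0, 0, 1; 1, 0, 0, 0; 0, 1, 0, 0]
  | 2 => !![0, 0, 0, -I; 0, 0, -I, 0; 0, -I, 0, 0; -I, 0, 0, 0]
  | 3 => !![0, I, 0, 0; -I, 0, 0, 0; 0, 0, 0, I; 0, 0, -I, 0]
  | 4 => !![0, 0, 0, -1; 0, 0, 1, 0; 0, 1, 0, 0; -1, 0, 0, 0]
  | 5 => !![0, 1, 0, 0; -1, 0, 0, 0; 0, 0, 0, -1; 0, 0, 1, 0]

/-- X(x) = Σ x^α Γ_α. -/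
noncomputable def Xm (x : Fin 6 → ℝ) : Matrix (Fin 4) (Fin 4) ℂ :=
  ∑ α : Fin 6, (x α : ℂ) • Gam α

/-- The quadratic form of signature (4,2). -/
def Qform (x : Fin 6 → ℝ) : ℝ :=
  x 0 ^ 2 + x 1 ^ 2 + x 2 ^ 2 - x 3 ^ 2 + x 4 ^ 2 - x 5 ^ 2

/-- The bilinear form of signature (4,2). -/
def Qbil (x y : Fin 6 → ℝ) : ℝ :=
  x 0 * y 0 + x 1 * y 1 + x 2 * y 2 - x 3 * y 3 + x 4 * y 4 - x 5 * y 5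

/-- G = diag(1,1,-1,-1) as a function. -/
def Gv : Fin 4 → ℝ := ![1, 1, -1, -1]

/-- The pseudo-Hermitian form of signature (2,2) on ℂ⁴. -/
def herm (u v : Fin 4 → ℂ) : ℂ :=
  u 0 * starRingEnd ℂ (v 0) + u 1 * starRingEnd ℂ (v 1)
    - u 2 * starRingEnd ℂ (v 2) - u 3 * starRingEnd ℂ (v 3)

/-- The Levi-Civita symbol on four indices, ε^{0123} = 1. -/
noncomputable def eps (i j k l : Fin 4) : ℝ :=
  (((j : ℕ) : ℝ) - ((i : ℕ) : ℝ)) * (((k : ℕ) : ℝ) - ((i : ℕ) : ℝ)) *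
    (((l : ℕ) : ℝ) - ((i : ℕ) : ℝ)) * (((k : ℕ) : ℝ) - ((j : ℕ) : ℝ)) *
    (((l : ℕ) : ℝ) - ((j : ℕ) : ℝ)) * (((l : ℕ) : ℝ) - ((k : ℕ) : ℝ)) / 12

/-- The six antisymmetric matrices Σ₁,…,Σ₆ (indexed 0,…,5). -/
noncomputable def Sig : Fin 6 → Matrix (Fin 4) (Fin 4) ℂ
  | 0 => !![0, 0, -I, 0; 0, 0, 0, I; I, 0, 0, 0; 0, -I, 0, 0]
  | 1 => !![0, 0, -1, 0; 0, 0, 0, -1; 1, 0, 0, 0; 0, 1, 0, 0]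
  | 2 => !![0, 0, 0, I; 0, 0, I, 0; 0, -I, 0, 0; -I, 0, 0, 0]
  | 3 => !![0, I, 0, 0; -I, 0, 0, 0; 0, 0, 0, -I; 0, 0, I, 0]
  | 4 => !![0, 0, 0, 1; 0, 0, -1, 0; 0, 1, 0, 0; -1, 0, 0, 0]
  | 5 => !![0, 1, 0, 0; -1, 0, 0, 0; 0, 0, 0, 1; 0, 0, -1, 0]

/-- Σ(x) = Σ x^α Σ_α. -/
noncomputable def Sm (x : Fin 6 → ℝ) : Matrix (Fin 4) (Fin 4) ℂ :=
  ∑ α : Fin 6, (x α : ℂ) • Sig α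

/-- The antilinear Hodge star on antisymmetric 4×4 complex matrices. -/
noncomputable def hstar (A : Matrix (Fin 4) (Fin 4) ℂ) : Matrix (Fin 4) (Fin 4) ℂ :=
  Matrix.of fun i j =>
    (1 / 2 : ℂ) * ∑ k : Fin 4, ∑ l : Fin 4,
      ((eps i j k l : ℝ) : ℂ) * ((Gv k : ℝ) : ℂ) * ((Gv l : ℝ) : ℂ) * starRingEnd ℂ (A k l)

set_option maxHeartbeats 1000000 in
lemma det4 {R : Type*} [CommRing R] (A : Matrix (Fin 4) (Fin 4) R) : A.det =
    A 0 0*A 1 1*A 2 2*A 3 3 - A 0 0*A 1 1*A 2 3*A 3 2 - A 0 0*A 1 2*A 2 1*A 3 3 + A 0 0*A 1 2*A 2 3*A 3 1 + A 0 0*A 1 3*A 2 1*A 3 2 - A 0 0*A 1 3*A 2 2*A 3 1 - A 0 1*A 1 0*A 2 2*A 3 3 + A 0 1*A 1 0*A 2 3*A 3 2 + A 0 1*A 1 2*A 2 0*A 3 3 - A 0 1*A 1 2*A 2 3*A 3 0 - A 0 1*A 1 3*A 2 0*A 3 2 + A 0 1*A 1 3*A 2 2*A 3 0 + A 0 2*A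 1 0*A 2 1*A 3 3 - A 0 2*A 1 0*A 2 3*A 3 1 - A 0 2*A 1 1*A 2 0*A 3 3 + A 0 2*A 1 1*A 2 3*A 3 0 + A 0 2*A 1 3*A 2 0*A 3 1 - A 0 2*A 1 3*A 2 1*A 3 0 - A 0 3*A 1 0*A 2 1*A 3 2 + A 0 3*A 1 0*A 2 2*A 3 1 + A 0 3*A 1 1*A 2 0*A 3 2 - A 0 3*A 1 1*A 2 2*A 3 0 - A 0 3*A 1 2*A 2 0*A 3 1 + A 0 3*A 1 2*A 2 1*A 3 0 := by
  simp [Matrix.det_succ_row_zero, Fin.sum_univ_succ, Fin.succAbove]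
  norm_num [Fin.succ, Fin.castSucc, Fin.castAdd, Fin.castLE, Fin.lt_def, Fin.ext_iff]
  ring

lemma Xm_eq (x : Fin 6 → ℝ) : Xm x =
    !![0, I*(x 3) + (x 5), I*(x 0) + (x 1), -(I*(x 2)) - (x 4);
       -(I*(x 3)) - (x 5), 0, -(I*(x 2)) + (x 4), -(I*(x 0)) + (x 1);
       I*(x 0) + (x 1), -(I*(x 2)) + (x 4), 0, I*(x 3) - (x 5);
       -(I*(x 2)) - (x 4), -(I*(x 0)) + (x 1), -(I*(x 3)) + (x 5), 0] := by
  ext i j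
  simp only [Xm, Matrix.sum_apply, Matrix.smul_apply, Fin.sum_univ_six, smul_eq_mul]
  fin_cases i <;> fin_cases j <;>
    simp [Gam, Matrix.vecHead, Matrix.vecTail, Function.comp] <;> ring

lemma Xmc_eq (x : Fin 6 → ℝ) : (Xm x).map (starRingEnd ℂ) =
    !![0, -(I*(x 3)) + (x 5), -(I*(x 0)) + (x 1), I*(x 2) - (x 4);
       I*(x 3) - (x 5), 0, I*(x 2) + (x 4), I*(x 0) + (x 1);
       -(I*(x 0)) + (x 1), I*(x 2) + (x 4), 0, -(I*(x 3)) - (x 5);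
       I*(x 2) - (x 4), I*(x 0) + (x 1), I*(x 3) + (x 5), 0] := by
  rw [Xm_eq]
  ext i j
  fin_cases i <;> fin_cases j <;> simp [Matrix.map_apply] <;> ring

set_option maxHeartbeats 1000000 in
lemma Xm_mul_conj (x : Fin 6 → ℝ) :
    Xm x * (Xm x).map (starRingEnd ℂ) = ((Qform x : ℝ) : ℂ) • 1 := by
  rw [Xmc_eq, Xm_eq]
  generalize hI : Complex.I = z
  have hz : z^2 = -1 := by rw [← hI]; exact Complex.I_sq
  ext i j
  fin_cases i <;> fin_cases j <;>
    · simp [Matrix.mul_apply, Fin.sum_univ_four, Matrix.one_apply, Qform]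
      push_cast
      first
      | linear_combination (-(x 0 : ℂ)*(x 0 : ℂ) - (x 2 : ℂ)*(x 2 : ℂ) + (x 3 : ℂ)*(x 3 : ℂ)) * hz
      | ring
      | skip

set_option maxHeartbeats 1000000 in
lemma conj_mul_Xm (x : Fin 6 → ℝ) :
    (Xm x).map (starRingEnd ℂ) * Xm x = ((Qform x : ℝ) : ℂ) • 1 := by
  rw [Xmc_eq, Xm_eq]
  generalize hI : Complex.I = z
  have hz : z^2 = -1 := by rw [← hI]; exact Complex.I_sq
  ext i j
  fin_cases i <;> fin_cases j <;>
    · simp [Matrix.mul_apply, Fin.sum_univ_four, Matrix.one_apply, Qform]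
      push_cast
      first
      | linear_combination (-(x 0 : ℂ)*(x 0 : ℂ) - (x 2 : ℂ)*(x 2 : ℂ) + (x 3 : ℂ)*(x 3 : ℂ)) * hz
      | ring
      | skip

lemma Xm_transpose (x : Fin 6 → ℝ) :
    (Xm x)ᵀ = -((Matrix.diagonal (fun i => ((Gv i : ℝ) : ℂ))) * Xm x *
      (Matrix.diagonal (fun i => ((Gv i : ℝ) : ℂ)))) := by
  rw [Xm_eq]
  ext i j
  fin_cases i <;> fin_cases j <;>
    simp [Matrix.mul_apply, Fin.sum_univ_four, Matrix.diagonal, Gv] <;> ring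

set_option maxHeartbeats 1000000 in
lemma Xm_det (x : Fin 6 → ℝ) : (Xm x).det = (((Qform x)^2 : ℝ) : ℂ) := by
  rw [Xm_eq, det4]
  generalize hI : Complex.I = z
  have hz : z^2 = -1 := by rw [← hI]; exact Complex.I_sq
  simp [Qform]
  push_cast
  linear_combination ((-1)*(x 0 : ℂ)*(x 0 : ℂ)*(x 0 : ℂ)*(x 0 : ℂ) + (1)*(x 0 : ℂ)*(x 0 : ℂ)*(x 0 : ℂ)*(x 0 : ℂ)*z*z + (-2)*(x 0 : ℂ)*(x 0 : ℂ)*(x 1 : ℂ)*(x 1 : ℂ) + (-2)*(x 0 : ℂ)*(x 0 : ℂ)*(x 2 : ℂ)*(x 2 : ℂ) + (2)*(x 0 : ℂ)*(x 0 : ℂ)*(x 2 : ℂ)*(x 2 : ℂ)*z*z + (2)*(x 0 : ℂ)*(x 0 : ℂ)*(x 3 : ℂ)*(x 3 : ℂ) + (-2)*(x 0 : ℂ)*(x 0 : ℂ)*(x 3 : ℂ)*(x 3 : ℂ)*z*z + (-2)*(x 0 : ℂ)*(x 0 : ℂ)*(x 4 : ℂ)*(x 4 : ℂ) + (2)*(x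 0 : ℂ)*(x 0 : ℂ)*(x 5 : ℂ)*(x 5 : ℂ) + (-2)*(x 1 : ℂ)*(x 1 : ℂ)*(x 2 : ℂ)*(x 2 : ℂ) + (2)*(x 1 : ℂ)*(x 1 : ℂ)*(x 3 : ℂ)*(x 3 : ℂ) + (-1)*(x 2 : ℂ)*(x 2 : ℂ)*(x 2 : ℂ)*(x 2 : ℂ) + (1)*(x 2 : ℂ)*(x 2 : ℂ)*(x 2 : ℂ)*(x 2 : ℂ)*z*z + (2)*(x 2 : ℂ)*(x 2 : ℂ)*(x 3 : ℂ)*(x 3 : ℂ) + (-2)*(x 2 : ℂ)*(x 2 : ℂ)*(x 3 : ℂ)*(x 3 : ℂ)*z*z + (-2)*(x 2 : ℂ)*(x 2 : ℂ)*(x 4 : ℂ)*(x 4 : ℂ) + (2)*(x 2 : ℂ)*(x 2 : ℂ)*(x 5 : ℂ)*(x 5 : ℂ) + (-1)*(x 3 : ℂ)*(x 3 : ℂ)*(x 3 : ℂ)*(x 3 : ℂ) + (1)*(x 3 : ℂ)*(x 3 : ℂ)*(x 3 : ℂ)*(x 3 : ℂ)*z*z + (2)*(x 3 : ℂ)*(x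 3 : ℂ)*(x 4 : ℂ)*(x 4 : ℂ) + (-2)*(x 3 : ℂ)*(x 3 : ℂ)*(x 5 : ℂ)*(x 5 : ℂ)) * hz

lemma Xm_ct (x : Fin 6 → ℝ) :
    (Xm x)ᴴ = -((Matrix.diagonal (fun i => ((Gv i : ℝ) : ℂ))) * (Xm x).map (starRingEnd ℂ) *
      (Matrix.diagonal (fun i => ((Gv i : ℝ) : ℂ)))) := by
  have h : (Xm x)ᴴ = ((Xm x).map (starRingEnd ℂ))ᵀ := by
    ext i j; simp [Matrix.conjTranspose_apply, Matrix.map_apply]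
  rw [h, Xmc_eq]
  ext i j
  fin_cases i <;> fin_cases j <;>
    simp [Matrix.mul_apply, Fin.sum_univ_four, Matrix.diagonal, Gv] <;> ring

lemma Ycm_ct (y : Fin 6 → ℝ) :
    ((Xm y).map (starRingEnd ℂ))ᴴ = -((Matrix.diagonal (fun i => ((Gv i : ℝ) : ℂ))) * Xm y *
      (Matrix.diagonal (fun i => ((Gv i : ℝ) : ℂ)))) := by
  have h : ((Xm y).map (starRingEnd ℂ))ᴴ = (Xm y)ᵀ := by
    ext i j; simp [Matrix.conjTranspose_apply, Matrix.map_apply]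
  rw [h, Xm_transpose]

/-- For normalized x, y (both of Q-norm 1 or both of Q-norm -1), the complex-linear operator
M = X(x)·conj(X(y)) belongs to SU(2,2): M G M† = G and det M = 1, where G = diag(1,1,-1,-1).
This realizes elements of Spin(4,2) inside SU(2,2). -/
theorem spin_in_SU22 (x y : Fin 6 → ℝ)
    (hnorm : (Qform x = 1 ∧ Qform y = 1) ∨ (Qform x = -1 ∧ Qform y = -1)) :
    (Xm x * (Xm y).map (starRingEnd ℂ)) *
        (Matrix.diagonal (fun i => ((Gv i : ℝ) : ℂ))) *
          (Xm x * (Xm y).map (starRingEnd ℂ))ᴴ =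
      Matrix.diagonal (fun i => ((Gv i : ℝ) : ℂ)) ∧
    (Xm x * (Xm y).map (starRingEnd ℂ)).det = 1 := by
  set D : Matrix (Fin 4) (Fin 4) ℂ := Matrix.diagonal (fun i => ((Gv i : ℝ) : ℂ)) with hD
  have hQ : ((Qform x : ℝ) : ℂ) * ((Qform y : ℝ) : ℂ) = 1 := by
    rcases hnorm with ⟨h1, h2⟩ | ⟨h1, h2⟩ <;> rw [h1, h2] <;> norm_num
  have hD2 : D * D = 1 := by
    rw [hD, Matrix.diagonal_mul_diagonal]
    have : (fun i => ((Gv i : ℝ) : ℂ) * ((Gv i : ℝ) : ℂ)) = fun _ => (1 : ℂ) := by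
      funext i; fin_cases i <;> norm_num [Gv]
    rw [this, Matrix.diagonal_one]
  have cancel : ∀ A : Matrix (Fin 4) (Fin 4) ℂ, A * D * D = A := fun A => by
    rw [Matrix.mul_assoc, hD2, Matrix.mul_one]
  constructor
  · rw [Matrix.conjTranspose_mul, Ycm_ct y, Xm_ct x]
    simp only [Matrix.mul_neg, Matrix.neg_mul, neg_neg, ← Matrix.mul_assoc]
    rw [cancel, cancel]
    rw [Matrix.mul_assoc (Xm x) _ (Xm y), conj_mul_Xm y]
    simp only [Matrix.mul_smul, Matrix.smul_mul, Matrix.mul_one, Matrix.one_mul,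
      Xm_mul_conj x, smul_smul, ← hD]
    rw [mul_comm ((Qform y : ℝ) : ℂ), hQ, one_smul]
  · have hmd : ((Xm y).map (starRingEnd ℂ)).det = (starRingEnd ℂ) ((Xm y).det) :=
      (RingHom.map_det (starRingEnd ℂ) (Xm y)).symm
    rw [Matrix.det_mul, Xm_det x, hmd, Xm_det y]
    rw [show (starRingEnd ℂ) (((Qform y)^2 : ℝ) : ℂ) = (((Qform y)^2 : ℝ) : ℂ) from
      Complex.conj_ofReal _]
    push_cast
    rw [show ((Qform x:ℂ))^2 * ((Qform y:ℂ))^2 = ((Qform x:ℂ) * (Qform y:ℂ))^2 by ring]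
    rw [show ((Qform x : ℝ):ℂ) * ((Qform y : ℝ):ℂ) = 1 from hQ]
    norm_num
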